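/- Fix a monomial order ≺ on ℕ² whose initial segments are finite. Let a and b be nonnegative integers with a < b, let C ∩ ℕ² = {(x, y) ∈ ℕ² : y ≤ x} be the integer points of the cone of ℚ₊² generated by (1,0) and (1,1), and let S = {k·(1,1) : k ∈ ℕ} ∪ {(x, y) ∈ ℕ² : y ≤ x and (x > b or y > a)}. Then S is a C-semigroup satisfying the extended Wilf conjecture: n(S)·e(S) ≥ N(Fb(S)) + 1. -/

import Mathlib

/-- `S ⊆ ℕ^p` contains `0` and is closed under addition. -/
def IsSubmonoidSet {p : ℕ} (S : Set (Fin p → ℕ)) : Prop :=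
  (0 : Fin p → ℕ) ∈ S ∧ ∀ x ∈ S, ∀ y ∈ S, x + y ∈ S

/-- `s` is a minimal generator of `S`: it is a nonzero element of `S` that is not a
sum of two nonzero elements of `S`. -/
def IsMinGen {p : ℕ} (S : Set (Fin p → ℕ)) (s : Fin p → ℕ) : Prop :=
  s ∈ S ∧ s ≠ 0 ∧ ∀ a ∈ S, ∀ b ∈ S, a ≠ 0 → b ≠ 0 → a + b ≠ s

/-- The (unique) minimal generating set of `S`. -/
def minGens {p : ℕ} (S : Set (Fin p → ℕ)) : Set (Fin p → ℕ) :=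
  {s | IsMinGen S s}

/-- `prec` is (the strict part of) a monomial order on `ℕ^p` all of whose initial
segments are finite. -/
def IsMonomialOrder {p : ℕ} (prec : (Fin p → ℕ) → (Fin p → ℕ) → Prop) : Prop :=
  (∀ a, ¬ prec a a) ∧
  (∀ a b c, prec a b → prec b c → prec a c) ∧
  (∀ a b, a ≠ b → prec a b ∨ prec b a) ∧
  (∀ a b c, prec a b → prec (a + c) (b + c)) ∧
  (∀ c, c ≠ (0 : Fin p → ℕ) → prec 0 c) ∧
  (∀ a, {b | prec b a}.Finite)

/-- The semigroup $S = ⟨(1,1)⟩ ∪ (C \setminus [0,b]×[0,a])$ where $C$ is the cone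
generated by $(1,0)$ and $(1,1)$. -/
def S18 (a b : ℕ) : Set (Fin 2 → ℕ) :=
  {v | (∃ k : ℕ, v = k • ![1, 1]) ∨ (v 1 ≤ v 0 ∧ (b < v 0 ∨ a < v 1))}

/-- The set of gaps of `S18 a b`: integer points of the cone not in the semigroup. -/
def H18 (a b : ℕ) : Set (Fin 2 → ℕ) :=
  {v | v 1 ≤ v 0 ∧ v ∉ S18 a b}

lemma ext2 {u v : Fin 2 → ℕ} (h0 : u 0 = v 0) (h1 : u 1 = v 1) : u = v := by
  funext i; fin_cases i <;> assumption

lemma mem_S18_iff (a b : ℕ) (v : Fin 2 → ℕ) :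
    v ∈ S18 a b ↔ v 1 ≤ v 0 ∧ (v 0 = v 1 ∨ b < v 0 ∨ a < v 1) := by
  constructor
  · rintro (⟨k, rfl⟩ | ⟨h1, h2⟩)
    · simp
    · exact ⟨h1, Or.inr h2⟩
  · rintro ⟨h1, (h2 | h2)⟩
    · exact Or.inl ⟨v 0, by apply ext2 <;> simp [h2]⟩
    · exact Or.inr ⟨h1, h2⟩

lemma mem_H18_iff (a b : ℕ) (v : Fin 2 → ℕ) :
    v ∈ H18 a b ↔ v 1 < v 0 ∧ v 0 ≤ b ∧ v 1 ≤ a := by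
  simp only [H18, Set.mem_setOf_eq, mem_S18_iff]
  omega

lemma ne_zero_iff2 (v : Fin 2 → ℕ) : v ≠ 0 ↔ v 0 ≠ 0 ∨ v 1 ≠ 0 := by
  constructor
  · intro h
    by_contra hc
    push_neg at hc
    exact h (ext2 hc.1 hc.2)
  · rintro (h | h) hv <;> simp [hv] at h


lemma S18_submonoid (a b : ℕ) : IsSubmonoidSet (S18 a b) := by
  constructor
  · rw [mem_S18_iff]; simp
  · intro x hx y hy
    rw [mem_S18_iff] at hx hy ⊢
    simp only [Pi.add_apply]
    omega

lemma S18_cone (a b : ℕ) : ∀ v ∈ S18 a b, v 1 ≤ v 0 := by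
  intro v hv; exact ((mem_S18_iff a b v).1 hv).1

lemma box_finite (N : ℕ) : {v : Fin 2 → ℕ | ∀ i, v i ≤ N}.Finite := by
  have : {v : Fin 2 → ℕ | ∀ i, v i ≤ N} = Set.pi Set.univ (fun _ => Set.Iic N) := by
    ext v
    constructor
    · intro h i _; exact h i
    · intro h i; exact h i (Set.mem_univ i)
  rw [this]
  exact Set.Finite.pi (fun _ => Set.finite_Iic N)

lemma H18_finite (a b : ℕ) : (H18 a b).Finite := by
  apply (box_finite b).subset
  intro v hv
  rw [mem_H18_iff] at hv
  intro i; fin_cases i <;> simp <;> omega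


section Order
variable {prec : (Fin 2 → ℕ) → (Fin 2 → ℕ) → Prop} (hprec : IsMonomialOrder prec)

lemma prec_of_le (hprec : IsMonomialOrder prec) {u v : Fin 2 → ℕ}
    (hle : ∀ i, u i ≤ v i) (hne : u ≠ v) : prec u v := by
  have hl0 := hle 0
  have hl1 := hle 1
  set c : Fin 2 → ℕ := fun i => v i - u i with hc
  have hc0 : c ≠ 0 := by
    rw [ne_zero_iff2]
    by_contra h
    push_neg at h
    simp only [hc] at h
    exact hne (ext2 (by omega) (by omega))
  have h1 : prec 0 c := hprec.2.2.2.2.1 c hc0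
  have h2 : prec (0 + u) (c + u) := hprec.2.2.2.1 0 c u h1
  have e1 : (0 : Fin 2 → ℕ) + u = u := by simp
  have e2 : c + u = v := by
    apply ext2 <;> simp [hc] <;> omega
  rwa [e1, e2] at h2

end Order


lemma pos_of_ne_zero' {a b : ℕ} {v : Fin 2 → ℕ} (hv : v ∈ S18 a b) (h : v ≠ 0) :
    1 ≤ v 0 := by
  have h1 := ((mem_S18_iff a b v).1 hv).1
  rw [ne_zero_iff2] at h
  omega

lemma minGen_col (a b k : ℕ) (hk : k ≤ b) : ![k + b + 1, 0] ∈ minGens (S18 a b) := by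
  refine ⟨?_, ?_, ?_⟩
  · rw [mem_S18_iff]; simp
  · rw [ne_zero_iff2]; simp
  · intro u hu w hw hu0 hw0 heq
    have h1 : u 1 + w 1 = 0 := by
      have := congrFun heq 1; simpa using this
    have h2 : u 0 + w 0 = k + b + 1 := by
      have := congrFun heq 0; simpa using this
    rw [mem_S18_iff] at hu hw
    rw [ne_zero_iff2] at hu0 hw0
    omega

lemma minGen_diag (a b : ℕ) : ![1, 1] ∈ minGens (S18 a b) := by
  refine ⟨?_, ?_, ?_⟩
  · rw [mem_S18_iff]; simp
  · rw [ne_zero_iff2]; simp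
  · intro u hu w hw hu0 hw0 heq
    have hu1 := pos_of_ne_zero' hu hu0
    have hw1 := pos_of_ne_zero' hw hw0
    have h2 : u 0 + w 0 = 1 := by
      have := congrFun heq 0; simpa using this
    omega

lemma minGens_finite (a b : ℕ) : (minGens (S18 a b)).Finite := by
  apply (box_finite (2 * b + 1)).subset
  intro v hv
  obtain ⟨hvS, hv0, hmin⟩ := hv
  have hcone := ((mem_S18_iff a b v).1 hvS).1
  have hbound : v 0 ≤ 2 * b + 1 := by
    by_contra hc
    push_neg at hc
    rcases Nat.eq_zero_or_pos (v 1) with h1 | h1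
    · -- v = (b+1,0) + (v0-b-1,0)
      refine hmin ![b+1, 0] ?_ ![v 0 - (b+1), 0] ?_ ?_ ?_ ?_
      · rw [mem_S18_iff]; simp
      · rw [mem_S18_iff]; simp; omega
      · rw [ne_zero_iff2]; simp
      · rw [ne_zero_iff2]; simp; omega
      · apply ext2 <;> simp <;> omega
    · -- v = (1,1) + (v-1)
      refine hmin ![1, 1] ?_ (fun i => v i - 1) ?_ ?_ ?_ ?_
      · rw [mem_S18_iff]; simp
      · rw [mem_S18_iff]; simp; omega
      · rw [ne_zero_iff2]; simp
      · rw [ne_zero_iff2]; simp; omega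
      · apply ext2 <;> simp <;> omega
  intro i; fin_cases i <;> simp <;> omega


lemma e_lower (a b : ℕ) : b + 2 ≤ (minGens (S18 a b)).ncard := by
  set G : Set (Fin 2 → ℕ) := insert ![1,1] ((fun k => ![k + b + 1, 0]) '' Set.Iic b) with hG
  have himfin : ((fun k => ![k + b + 1, 0] : ℕ → Fin 2 → ℕ) '' Set.Iic b).Finite :=
    (Set.finite_Iic b).image _
  have hinj : Function.Injective (fun k => ![k + b + 1, 0] : ℕ → Fin 2 → ℕ) := by
    intro x y hxy
    have := congrFun hxy 0
    simpa using this
  have hnot : ![1,1] ∉ (fun k => ![k + b + 1, 0] : ℕ → Fin 2 → ℕ) '' Set.Iic b := by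
    rintro ⟨k, -, hk⟩
    have := congrFun hk 1
    simp at this
  have hcard : G.ncard = b + 2 := by
    rw [hG, Set.ncard_insert_of_notMem hnot himfin,
      Set.ncard_image_of_injective _ hinj,
      ← Finset.coe_Iic, Set.ncard_coe_finset, Nat.card_Iic]
  have hsub : G ⊆ minGens (S18 a b) := by
    rintro v (rfl | ⟨k, hk, rfl⟩)
    · exact minGen_diag a b
    · exact minGen_col a b k hk
  rw [← hcard]
  exact Set.ncard_le_ncard hsub (minGens_finite a b)


lemma g_upper (a b : ℕ) : (H18 a b).ncard ≤ (a + 1) * b := by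
  have hsub : H18 a b ⊆ (fun p : ℕ × ℕ => ![p.1 + 1, p.2]) ''
      ↑(Finset.range b ×ˢ Finset.range (a + 1)) := by
    intro v hv
    rw [mem_H18_iff] at hv
    refine ⟨(v 0 - 1, v 1), ?_, ?_⟩
    · simp [Finset.mem_product]; omega
    · apply ext2 <;> simp <;> omega
  calc (H18 a b).ncard ≤ _ := Set.ncard_le_ncard hsub
        (((Finset.range b ×ˢ Finset.range (a+1)) : Finset (ℕ×ℕ)).finite_toSet.image _)
    _ ≤ (↑(Finset.range b ×ˢ Finset.range (a + 1)) : Set (ℕ × ℕ)).ncard :=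
        Set.ncard_image_le ((Finset.range b ×ˢ Finset.range (a+1)) : Finset (ℕ×ℕ)).finite_toSet
    _ = (a + 1) * b := by
        rw [Set.ncard_coe_finset, Finset.card_product, Finset.card_range, Finset.card_range]
        ring


lemma n_lower {prec : (Fin 2 → ℕ) → (Fin 2 → ℕ) → Prop} (hprec : IsMonomialOrder prec)
    (a b : ℕ) (hab : a < b) (Fb : Fin 2 → ℕ)
    (hFb : Fb ∈ H18 a b ∧ ∀ x ∈ H18 a b, x ≠ Fb → prec x Fb) :
    a + 1 ≤ {x : Fin 2 → ℕ | x ∈ S18 a b ∧ prec x Fb}.ncard := by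
  set T := {x : Fin 2 → ℕ | x ∈ S18 a b ∧ prec x Fb} with hT
  have hTfin : T.Finite := (hprec.2.2.2.2.2 Fb).subset (fun x hx => hx.2)
  set D : Set (Fin 2 → ℕ) := (fun k : ℕ => k • ![1, 1]) '' Set.Iic a with hD
  have hinj : Function.Injective (fun k : ℕ => (k • ![1, 1] : Fin 2 → ℕ)) := by
    intro x y hxy
    have := congrFun hxy 0
    simpa using this
  have hwH : ![b, a] ∈ H18 a b := by rw [mem_H18_iff]; simp; omega
  have hwprec : ∀ k ≤ a, prec (k • ![1, 1]) Fb := by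
    intro k hk
    have hle : ∀ i, (k • ![1, 1] : Fin 2 → ℕ) i ≤ (![b, a] : Fin 2 → ℕ) i := by
      intro i; fin_cases i <;> simp <;> omega
    have hne : (k • ![1, 1] : Fin 2 → ℕ) ≠ ![b, a] := by
      intro h
      have := congrFun h 0
      simp at this
      omega
    have h1 : prec (k • ![1, 1]) ![b, a] := prec_of_le hprec hle hne
    rcases eq_or_ne (![b, a] : Fin 2 → ℕ) Fb with h | h
    · rwa [h] at h1
    · exact hprec.2.1 _ _ _ h1 (hFb.2 _ hwH h)
  have hsub : D ⊆ T := by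
    rintro v ⟨k, hk, rfl⟩
    exact ⟨Or.inl ⟨k, rfl⟩, hwprec k hk⟩
  calc a + 1 = D.ncard := by
        rw [hD, Set.ncard_image_of_injective _ hinj, ← Finset.coe_Iic,
          Set.ncard_coe_finset, Nat.card_Iic]
    _ ≤ T.ncard := Set.ncard_le_ncard hsub hTfin


theorem stmt19 (prec : (Fin 2 → ℕ) → (Fin 2 → ℕ) → Prop) (hprec : IsMonomialOrder prec)
    (a b : ℕ) (hab : a < b)
    (Fb : Fin 2 → ℕ)
    (hFb : Fb ∈ H18 a b ∧ ∀ x ∈ H18 a b, x ≠ Fb → prec x Fb) :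
    IsSubmonoidSet (S18 a b) ∧
    (∀ v ∈ S18 a b, v 1 ≤ v 0) ∧
    (H18 a b).Finite ∧
    {x : Fin 2 → ℕ | x ∈ S18 a b ∧ prec x Fb}.ncard + (H18 a b).ncard + 1
      ≤ {x : Fin 2 → ℕ | x ∈ S18 a b ∧ prec x Fb}.ncard * (minGens (S18 a b)).ncard := by
  refine ⟨S18_submonoid a b, S18_cone a b, H18_finite a b, ?_⟩
  have hn := n_lower hprec a b hab Fb hFb
  have he := e_lower a b
  have hg := g_upper a b
  set n := {x : Fin 2 → ℕ | x ∈ S18 a b ∧ prec x Fb}.ncard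
  set g := (H18 a b).ncard
  set e := (minGens (S18 a b)).ncard
  have h1 : n * (b + 2) ≤ n * e := Nat.mul_le_mul_left n he
  have h2 : (a + 1) * b ≤ n * b := Nat.mul_le_mul_right b hn
  nlinarith
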